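/- Let φ(u,s) = (√(1 − u + s²) + s)² / ((1 − u)²·√(1 − u + s²)) on the open set {(u,s) ∈ ℝ² : 0 ≤ s² ≤ u < 1} (where φ > 0), and set ψ := (φ₂ + 2s·φ₁)/(2φ). Then ψ² − (ψ₂ + 2s·ψ₁) = 0. Equivalently, φ satisfies the Einstein PDE (∗∗) with μ = 0 and K = 0 for every κ. -/

import Mathlib

/-- First partial derivative of `f = f(u,s)` with respect to `u`. -/
noncomputable def pd1 (f : ℝ → ℝ → ℝ) (u s : ℝ) : ℝ := deriv (fun t => f t s) u

/-- First partial derivative of `f = f(u,s)` with respect to `s`. -/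
noncomputable def pd2 (f : ℝ → ℝ → ℝ) (u s : ℝ) : ℝ := deriv (f u) s

/-- `ψ := (φ₂ + 2s·φ₁)/(2φ)`. -/
noncomputable def psi (f : ℝ → ℝ → ℝ) (u s : ℝ) : ℝ :=
  (pd2 f u s + 2 * s * pd1 f u s) / (2 * f u s)

/-- The defining function of the square metric in navigation-type form. -/
noncomputable def phi (u s : ℝ) : ℝ :=
  (Real.sqrt (1 - u + s ^ 2) + s) ^ 2 / ((1 - u) ^ 2 * Real.sqrt (1 - u + s ^ 2))

section aux

lemma sqrt_facts (u s : ℝ) (hu : u < 1) :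
    0 < 1 - u + s ^ 2 ∧ 0 < Real.sqrt (1 - u + s ^ 2) ∧
      s < Real.sqrt (1 - u + s ^ 2) ∧ (Real.sqrt (1 - u + s ^ 2)) ^ 2 = 1 - u + s ^ 2 := by
  have hc : 0 < 1 - u + s ^ 2 := by nlinarith [sq_nonneg s]
  have hw : 0 < Real.sqrt (1 - u + s ^ 2) := Real.sqrt_pos.2 hc
  have hw2 : (Real.sqrt (1 - u + s ^ 2)) ^ 2 = 1 - u + s ^ 2 := Real.sq_sqrt hc.le
  refine ⟨hc, hw, ?_, hw2⟩
  nlinarith [hw, hw2]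

lemma hasDerivAt_W1 (u s : ℝ) (hu : u < 1) :
    HasDerivAt (fun t => Real.sqrt (1 - t + s ^ 2))
      (-(1 / (2 * Real.sqrt (1 - u + s ^ 2)))) u := by
  obtain ⟨hc, hw, -, -⟩ := sqrt_facts u s hu
  have h1 : HasDerivAt (fun t : ℝ => 1 - t + s ^ 2) (-1) u := by
    simpa using ((hasDerivAt_id u).const_sub 1).add_const (s ^ 2)
  have := (Real.hasDerivAt_sqrt hc.ne').comp u h1
  simpa [mul_comm, Function.comp_def] using this

lemma hasDerivAt_W2 (u s : ℝ) (hu : u < 1) :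
    HasDerivAt (fun y => Real.sqrt (1 - u + y ^ 2))
      (s / Real.sqrt (1 - u + s ^ 2)) s := by
  obtain ⟨hc, hw, -, -⟩ := sqrt_facts u s hu
  have h1 : HasDerivAt (fun y : ℝ => 1 - u + y ^ 2) (2 * s) s := by
    simpa using (((hasDerivAt_pow 2 s)).const_add (1 - u))
  have := (Real.hasDerivAt_sqrt hc.ne').comp s h1
  refine this.congr_deriv ?_
  field_simp

/-- Key closed form: `ψ = 1/(√(1-u+s²) - s)` for `u < 1`. -/
lemma psi_phi_eq (u s : ℝ) (hu : u < 1) :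
    psi phi u s = (Real.sqrt (1 - u + s ^ 2) - s)⁻¹ := by
  obtain ⟨hc, hw, hsw, hw2⟩ := sqrt_facts u s hu
  set w := Real.sqrt (1 - u + s ^ 2) with hwdef
  have h1u : (0:ℝ) < 1 - u := by linarith
  have hden : (1 - u) ^ 2 * w ≠ 0 := by positivity
  have hws : w + s > 0 := by nlinarith
  -- pd1 phi
  have HN1 : HasDerivAt (fun t => (Real.sqrt (1 - t + s ^ 2) + s) ^ 2)
      (2 * (w + s) ^ 1 * (-(1 / (2 * w)))) u := by
    exact ((hasDerivAt_W1 u s hu).add_const s).pow 2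
  have Hq : HasDerivAt (fun t : ℝ => (1 - t) ^ 2) (2 * (1 - u) ^ 1 * (-1)) u := by
    exact ((hasDerivAt_id u).const_sub 1).pow 2
  have HD1 : HasDerivAt (fun t => (1 - t) ^ 2 * Real.sqrt (1 - t + s ^ 2))
      (2 * (1 - u) ^ 1 * (-1) * w + (1 - u) ^ 2 * (-(1 / (2 * w)))) u :=
    Hq.mul (hasDerivAt_W1 u s hu)
  have Hphi1 : HasDerivAt (fun t => phi t s)
      ((2 * (w + s) ^ 1 * (-(1 / (2 * w))) * ((1 - u) ^ 2 * w) -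
        (w + s) ^ 2 * (2 * (1 - u) ^ 1 * (-1) * w + (1 - u) ^ 2 * (-(1 / (2 * w))))) /
        ((1 - u) ^ 2 * w) ^ 2) u := by
    exact HN1.div HD1 hden
  -- pd2 phi
  have HN2 : HasDerivAt (fun y => (Real.sqrt (1 - u + y ^ 2) + y) ^ 2)
      (2 * (w + s) ^ 1 * (s / w + 1)) s := by
    exact ((hasDerivAt_W2 u s hu).add (hasDerivAt_id s)).pow 2
  have HD2 : HasDerivAt (fun y => (1 - u) ^ 2 * Real.sqrt (1 - u + y ^ 2))
      ((1 - u) ^ 2 * (s / w)) s := (hasDerivAt_W2 u s hu).const_mul _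
  have Hphi2 : HasDerivAt (phi u)
      ((2 * (w + s) ^ 1 * (s / w + 1) * ((1 - u) ^ 2 * w) -
        (w + s) ^ 2 * ((1 - u) ^ 2 * (s / w))) / ((1 - u) ^ 2 * w) ^ 2) s := by
    have := HN2.div HD2 hden
    exact this
  have e1 : pd1 phi u s = _ := Hphi1.deriv
  have e2 : pd2 phi u s = _ := Hphi2.deriv
  rw [psi, e1, e2, phi]
  rw [← hwdef]
  have hr : (1:ℝ) - u = w ^ 2 - s ^ 2 := by linarith [hw2]
  rw [hr]
  have hwne : w ≠ 0 := hw.ne'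
  have hwsne : w - s ≠ 0 := by nlinarith
  have hwsne' : w + s ≠ 0 := by nlinarith
  have hq : w ^ 2 - s ^ 2 ≠ 0 := by
    intro h; apply hwsne; nlinarith
  field_simp
  ring

lemma psi_deriv1 (u s : ℝ) (hu : u < 1) :
    pd1 (psi phi) u s =
      (1 / (2 * Real.sqrt (1 - u + s ^ 2))) / (Real.sqrt (1 - u + s ^ 2) - s) ^ 2 := by
  obtain ⟨hc, hw, hsw, hw2⟩ := sqrt_facts u s hu
  have hev : (fun t => psi phi t s) =ᶠ[nhds u]
      (fun t => (Real.sqrt (1 - t + s ^ 2) - s)⁻¹) := by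
    filter_upwards [(isOpen_Iio (a := (1:ℝ))).mem_nhds hu] with t ht
    exact psi_phi_eq t s ht
  have hne : Real.sqrt (1 - u + s ^ 2) - s ≠ 0 := by linarith
  have H : HasDerivAt (fun t => (Real.sqrt (1 - t + s ^ 2) - s)⁻¹)
      (-(-(1 / (2 * Real.sqrt (1 - u + s ^ 2)))) / (Real.sqrt (1 - u + s ^ 2) - s) ^ 2) u :=
    ((hasDerivAt_W1 u s hu).sub_const s).inv hne
  rw [pd1, hev.deriv_eq, H.deriv]
  ring

lemma psi_deriv2 (u s : ℝ) (hu : u < 1) :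
    pd2 (psi phi) u s =
      -(s / Real.sqrt (1 - u + s ^ 2) - 1) / (Real.sqrt (1 - u + s ^ 2) - s) ^ 2 := by
  obtain ⟨hc, hw, hsw, hw2⟩ := sqrt_facts u s hu
  have hfun : psi phi u = fun y => (Real.sqrt (1 - u + y ^ 2) - y)⁻¹ := by
    funext y; exact psi_phi_eq u y hu
  have hne : Real.sqrt (1 - u + s ^ 2) - s ≠ 0 := by linarith
  have H : HasDerivAt (fun y => (Real.sqrt (1 - u + y ^ 2) - y)⁻¹)
      (-(s / Real.sqrt (1 - u + s ^ 2) - 1) / (Real.sqrt (1 - u + s ^ 2) - s) ^ 2) s := by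
    have := ((hasDerivAt_W2 u s hu).sub (hasDerivAt_id s)).inv hne
    simpa [Pi.sub_def, Pi.inv_def] using this
  rw [pd2, hfun, H.deriv]

end aux

/-- For `φ(u,s) = (√(1 − u + s²) + s)²/((1 − u)²·√(1 − u + s²))` on
`{0 ≤ s² ≤ u < 1}`, with `ψ := (φ₂ + 2s·φ₁)/(2φ)`, one has
`ψ² − (ψ₂ + 2s·ψ₁) = 0`; equivalently, φ satisfies the Einstein PDE (∗∗) with
`μ = 0` and `K = 0` for every `κ`. -/
theorem stmt_4 : ∀ u s : ℝ, s ^ 2 ≤ u → u < 1 →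
    ((psi phi u s) ^ 2 - (pd2 (psi phi) u s + 2 * s * pd1 (psi phi) u s) = 0
      ∧ ∀ κ : ℝ, (κ - 0 * u) *
          ((psi phi u s) ^ 2 - (pd2 (psi phi) u s + 2 * s * pd1 (psi phi) u s))
          + 0 * s * psi phi u s + 0 = 0 * (phi u s) ^ 2) := by
  intro u s _ hu
  obtain ⟨hc, hw, hsw, hw2⟩ := sqrt_facts u s hu
  have hne : Real.sqrt (1 - u + s ^ 2) - s ≠ 0 := by linarith
  have hwne : Real.sqrt (1 - u + s ^ 2) ≠ 0 := hw.ne'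
  have key : (psi phi u s) ^ 2 - (pd2 (psi phi) u s + 2 * s * pd1 (psi phi) u s) = 0 := by
    rw [psi_phi_eq u s hu, psi_deriv1 u s hu, psi_deriv2 u s hu]
    field_simp
    ring
  exact ⟨key, fun κ => by rw [key]; ring⟩
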